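/- In the two-player interconnected contest with Tullock contest success function with parameter γ ∈ (0,1], in every Nash equilibrium every battlefield receives positive effective effort from at least one player: for every k ∈ B, y_1^k + y_2^k > 0. -/

import Mathlib

open Finset Matrix

/-- Effective effort of a player with spillover matrix `ρ` and effort vector `e`
at battlefield `k`: `y^k = e^k + ∑_{l ≠ k} ρ^{l,k} e^l`. -/
noncomputable def effY {m : ℕ} (ρ : Matrix (Fin m) (Fin m) ℝ) (e : Fin m → ℝ)
    (k : Fin m) : ℝ :=
  e k + ∑ l ∈ Finset.univ.erase k, ρ l k * e l

/-- Tullock contest success function with parameter `γ`.  When both effective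
efforts are `0` this gives `0/0 = 0`, matching the convention. -/
noncomputable def tullock (γ y₁ y₂ : ℝ) : ℝ :=
  y₁ ^ γ / (y₁ ^ γ + y₂ ^ γ)

/-- Payoff of player `i` in the interconnected contest. -/
noncomputable def payoff {m : ℕ} (γ : ℝ) (v : Fin m → ℝ) (c : Fin 2 → ℝ)
    (ρ : Fin 2 → Matrix (Fin m) (Fin m) ℝ) (e : Fin 2 → Fin m → ℝ) (i : Fin 2) : ℝ :=
  (∑ k, v k * tullock γ (effY (ρ i) (e i) k) (effY (ρ (1 - i)) (e (1 - i)) k))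
    - c i * ∑ k, e i k

/-- Pure strategy Nash equilibrium of the interconnected contest:
nonnegative efforts, and no profitable deviation to any nonnegative effort vector. -/
def IsNashEq {m : ℕ} (γ : ℝ) (v : Fin m → ℝ) (c : Fin 2 → ℝ)
    (ρ : Fin 2 → Matrix (Fin m) (Fin m) ℝ) (e : Fin 2 → Fin m → ℝ) : Prop :=
  (∀ i k, 0 ≤ e i k) ∧
  ∀ (i : Fin 2) (e' : Fin m → ℝ), (∀ k, 0 ≤ e' k) →
    payoff γ v c ρ (Function.update e i e') i ≤ payoff γ v c ρ e i

/-- Winning probability of player `i` at battlefield `k` under profile `e`. -/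
noncomputable def eqProb {m : ℕ} (γ : ℝ) (ρ : Fin 2 → Matrix (Fin m) (Fin m) ℝ)
    (e : Fin 2 → Fin m → ℝ) (i : Fin 2) (k : Fin m) : ℝ :=
  tullock γ (effY (ρ i) (e i) k) (effY (ρ (1 - i)) (e (1 - i)) k)


lemma effY_nonneg {m : ℕ} (ρ : Matrix (Fin m) (Fin m) ℝ) (e : Fin m → ℝ)
    (hρ : ∀ k l, 0 ≤ ρ k l) (he : ∀ k, 0 ≤ e k) (k : Fin m) : 0 ≤ effY ρ e k :=
  add_nonneg (he k) (Finset.sum_nonneg fun l _ => mul_nonneg (hρ l k) (he l))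

lemma effY_mono {m : ℕ} (ρ : Matrix (Fin m) (Fin m) ℝ) (e e' : Fin m → ℝ)
    (hρ : ∀ k l, 0 ≤ ρ k l) (h : ∀ k, e k ≤ e' k) (k : Fin m) :
    effY ρ e k ≤ effY ρ e' k :=
  add_le_add (h k) (Finset.sum_le_sum fun l _ => mul_le_mul_of_nonneg_left (h l) (hρ l k))

lemma tullock_nonneg (γ a b : ℝ) (ha : 0 ≤ a) (hb : 0 ≤ b) : 0 ≤ tullock γ a b :=
  div_nonneg (Real.rpow_nonneg ha γ)
    (add_nonneg (Real.rpow_nonneg ha γ) (Real.rpow_nonneg hb γ))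

lemma tullock_mono (γ : ℝ) (hγ : 0 < γ) {a a' b : ℝ} (ha : 0 ≤ a) (hb : 0 ≤ b)
    (haa : a ≤ a') : tullock γ a b ≤ tullock γ a' b := by
  have ha' : 0 ≤ a' := ha.trans haa
  have hA : 0 ≤ a ^ γ := Real.rpow_nonneg ha γ
  have hA' : 0 ≤ a' ^ γ := Real.rpow_nonneg ha' γ
  have hB : 0 ≤ b ^ γ := Real.rpow_nonneg hb γ
  have hle : a ^ γ ≤ a' ^ γ := Real.rpow_le_rpow ha haa hγ.le
  rcases eq_or_lt_of_le (add_nonneg hA' hB) with h | h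
  · have h0 : a' ^ γ = 0 := by nlinarith
    have hb0 : b ^ γ = 0 := by nlinarith
    have ha0 : a ^ γ = 0 := le_antisymm (hle.trans h0.le) hA
    simp [tullock, ha0, h0, hb0]
  · rcases eq_or_lt_of_le (add_nonneg hA hB) with h2 | h2
    · have ha0 : a ^ γ = 0 := by nlinarith
      have h3 : tullock γ a b = 0 := by simp [tullock, ha0]
      rw [h3]; exact tullock_nonneg γ a' b ha' hb
    · rw [tullock, tullock, div_le_div_iff₀ h2 h]
      nlinarith

lemma tullock_zero_zero (γ : ℝ) (hγ : 0 < γ) : tullock γ 0 0 = 0 := by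
  simp [tullock, Real.zero_rpow hγ.ne']

lemma tullock_pos_zero (γ : ℝ) (hγ : 0 < γ) {a : ℝ} (ha : 0 < a) :
    tullock γ a 0 = 1 := by
  have : a ^ γ ≠ 0 := ne_of_gt (Real.rpow_pos_of_pos ha γ)
  simp [tullock, Real.zero_rpow hγ.ne', this]

/-- in every equilibrium every battlefield receives positive
effective effort from at least one player. -/
theorem every_battlefield_positive_effective_effort (m : ℕ) (γ : ℝ) (hγ0 : 0 < γ) (hγ1 : γ ≤ 1)
    (v : Fin m → ℝ) (hv : ∀ k, 0 < v k)
    (c : Fin 2 → ℝ) (hc : ∀ i, 0 < c i)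
    (ρ : Fin 2 → Matrix (Fin m) (Fin m) ℝ)
    (hρ : ∀ i k l, 0 ≤ ρ i k l) (hρd : ∀ i k, ρ i k k = 0)
    (e : Fin 2 → Fin m → ℝ) (he : IsNashEq γ v c ρ e) (k : Fin m) :
    0 < effY (ρ 0) (e 0) k + effY (ρ 1) (e 1) k := by
  by_contra hcon
  push_neg at hcon
  obtain ⟨hnn, hne⟩ := he
  have hy0 : ∀ i j, 0 ≤ effY (ρ i) (e i) j :=
    fun i j => effY_nonneg (ρ i) (e i) (hρ i) (hnn i) j
  have h0 : effY (ρ 0) (e 0) k = 0 := le_antisymm (by linarith [hy0 1 k]) (hy0 0 k)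
  have h1 : effY (ρ 1) (e 1) k = 0 := le_antisymm (by linarith [hy0 0 k]) (hy0 1 k)
  set ε : ℝ := v k / (2 * c 0) with hεdef
  have hεpos : 0 < ε := div_pos (hv k) (by have := hc 0; linarith)
  have hcε : c 0 * ε = v k / 2 := by
    have hc0 : (c 0) ≠ 0 := (hc 0).ne'
    rw [hεdef]; field_simp
  have he0k : e 0 k = 0 := by
    have h2 : e 0 k ≤ effY (ρ 0) (e 0) k :=
      le_add_of_nonneg_right
        (Finset.sum_nonneg fun l _ => mul_nonneg (hρ 0 l k) (hnn 0 l))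
    exact le_antisymm (h2.trans h0.le) (hnn 0 k)
  set e' : Fin m → ℝ := Function.update (e 0) k ε with he'def
  have hle : ∀ j, e 0 j ≤ e' j := by
    intro j
    by_cases hj : j = k
    · subst hj; simp [he'def, he0k, hεpos.le]
    · simp [he'def, Function.update_of_ne hj]
  have he'nn : ∀ j, 0 ≤ e' j := fun j => (hnn 0 j).trans (hle j)
  have key := hne 0 e' he'nn
  have hupd0 : Function.update e 0 e' 0 = e' := Function.update_self 0 e' e
  have h10 : (1 - 0 : Fin 2) = 1 := by decide
  have hupd1 : Function.update e 0 e' (1 - 0) = e 1 := by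
    rw [h10]; exact Function.update_of_ne (show (1:Fin 2) ≠ 0 by decide) e' e
  rw [payoff, payoff, hupd0, hupd1, h10] at key
  -- sum of e'
  have hsum : ∑ j, e' j = ε + ∑ j, e 0 j := by
    rw [he'def, Finset.sum_update_of_mem (Finset.mem_univ k), ← Finset.erase_eq]
    rw [← Finset.add_sum_erase Finset.univ (e 0) (Finset.mem_univ k), he0k, zero_add]
  -- pointwise probability comparison
  have hp : ∀ j, tullock γ (effY (ρ 0) (e 0) j) (effY (ρ 1) (e 1) j)
      ≤ tullock γ (effY (ρ 0) e' j) (effY (ρ 1) (e 1) j) :=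
    fun j => tullock_mono γ hγ0 (hy0 0 j) (hy0 1 j)
      (effY_mono (ρ 0) (e 0) e' (hρ 0) hle j)
  have hy'k : 0 < effY (ρ 0) e' k := by
    have h2 : e' k = ε := by simp [he'def]
    have h3 : 0 ≤ ∑ l ∈ Finset.univ.erase k, ρ 0 l k * e' l :=
      Finset.sum_nonneg fun l _ => mul_nonneg (hρ 0 l k) (he'nn l)
    rw [effY, h2]; linarith
  have hpk : tullock γ (effY (ρ 0) (e 0) k) (effY (ρ 1) (e 1) k) = 0 := by
    rw [h0, h1]; exact tullock_zero_zero γ hγ0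
  have hp'k : tullock γ (effY (ρ 0) e' k) (effY (ρ 1) (e 1) k) = 1 := by
    rw [h1]; exact tullock_pos_zero γ hγ0 hy'k
  -- gain at battlefield k dominates
  have hgain : v k ≤ ∑ j, (v j * tullock γ (effY (ρ 0) e' j) (effY (ρ 1) (e 1) j)
      - v j * tullock γ (effY (ρ 0) (e 0) j) (effY (ρ 1) (e 1) j)) := by
    have hterm : v k * tullock γ (effY (ρ 0) e' k) (effY (ρ 1) (e 1) k)
        - v k * tullock γ (effY (ρ 0) (e 0) k) (effY (ρ 1) (e 1) k) = v k := by
      rw [hpk, hp'k]; ring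
    have hnonneg : ∀ j ∈ (Finset.univ : Finset (Fin m)), (0:ℝ) ≤
        v j * tullock γ (effY (ρ 0) e' j) (effY (ρ 1) (e 1) j)
          - v j * tullock γ (effY (ρ 0) (e 0) j) (effY (ρ 1) (e 1) j) := by
      intro j _
      have h4 := hp j
      nlinarith [(hv j).le]
    have h5 := Finset.single_le_sum hnonneg (Finset.mem_univ k)
    rw [hterm] at h5
    exact h5
  rw [Finset.sum_sub_distrib] at hgain
  rw [hsum] at key
  nlinarith [hv k, (hc 0)]
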